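/- Termination of difference reduction: let ≻ be an admissible ordering on difference monomials and let F̃ be a finite set of monic nonzero difference polynomials. Then there is no infinite chain of elementary reduction steps modulo F̃ starting from any polynomial p; consequently every p ∈ R reaches, after finitely many reduction steps modulo F̃, a polynomial in normal form modulo F̃ (in particular normal forms modulo F̃ exist for every p). -/

import Mathlib

/-- The free commutative monoid of shifts `Θ`. -/
abbrev Shift (n : ℕ) := Fin n → ℕ

/-- The set of difference variables `V = Θ × Fin m`. -/
abbrev DVar (n m : ℕ) := (Fin n → ℕ) × Fin m

/-- The additive commutative monoid of difference monomials `M = V →₀ ℕ`. -/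
abbrev DMon (n m : ℕ) := DVar n m →₀ ℕ

/-- Action of a shift `θ` on a difference variable: `θ • (θ', α) = (θ + θ', α)`. -/
def shiftV {n m : ℕ} (θ : Shift n) (v : DVar n m) : DVar n m := (θ + v.1, v.2)

/-- Action of a shift `θ` on a difference monomial. -/
noncomputable def shiftM {n m : ℕ} (θ : Shift n) (w : DMon n m) : DMon n m :=
  Finsupp.mapDomain (shiftV θ) w

/-- Divisibility of difference monomials: `v ∣ w` iff `w = t + θ • v`. -/
def MDvd {n m : ℕ} (v w : DMon n m) : Prop :=
  ∃ (t : DMon n m) (θ : Shift n), w = t + shiftM θ v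

/-- The action of the shift `θ` on the difference polynomial ring
`R = MvPolynomial (DVar n m) K`: the ring endomorphism `σ^θ` applying the given
endomorphism `σK θ` of `K` to coefficients and `θ • ·` to variables. -/
noncomputable def sigmaR {n m : ℕ} {K : Type} [Field K] (σK : Shift n → (K →+* K))
    (θ : Shift n) :
    MvPolynomial (DVar n m) K →+* MvPolynomial (DVar n m) K :=
  MvPolynomial.eval₂Hom (MvPolynomial.C.comp (σK θ)) fun v => MvPolynomial.X (shiftV θ v)

/-- An admissible ordering on difference monomials: a (strict) linear order `lt` such that
`m ≻ 0` for `m ≠ 0`, compatible with addition of monomials and the action of shifts,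
and extending a ranking on the variables. -/
structure Admissible (n m : ℕ) where
  lt : DMon n m → DMon n m → Prop
  irrefl : ∀ a, ¬ lt a a
  trans : ∀ a b c, lt a b → lt b c → lt a c
  trichotomy : ∀ a b, lt a b ∨ a = b ∨ lt b a
  pos : ∀ a : DMon n m, a ≠ 0 → lt 0 a
  compat : ∀ (v w t : DMon n m) (θ : Shift n), lt v w ↔ lt (t + shiftM θ v) (t + shiftM θ w)
  ranking : ∀ (θ : Shift n) (i : Fin n) (α : Fin m),
    lt (Finsupp.single (θ, α) 1) (Finsupp.single (θ + Pi.single i 1, α) 1)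

/-- `w` is the leading monomial of `f` w.r.t. the ordering `ord`:
it occurs in `f` and is `ord`-greater than any other monomial of `f`. -/
def IsLm {n m : ℕ} {K : Type} [Field K] (ord : Admissible n m)
    (f : MvPolynomial (DVar n m) K) (w : DMon n m) : Prop :=
  w ∈ f.support ∧ ∀ w' ∈ f.support, w' ≠ w → ord.lt w' w

/-- `f` is monic: its leading coefficient equals `1`. -/
def IsMonicP {n m : ℕ} {K : Type} [Field K] (ord : Admissible n m)
    (f : MvPolynomial (DVar n m) K) : Prop :=
  ∃ w, IsLm ord f w ∧ f.coeff w = 1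

/-- Elementary reduction step modulo the set `F`: for some `q ∈ F` with leading monomial
`lq`, and a monomial `w = t + θ • lq` occurring in `p` with coefficient `c`, subtract
`c · X^t · σ^θ(q)` from `p`, thereby removing the monomial `w`. -/
def RedStep {n m : ℕ} {K : Type} [Field K] (σK : Shift n → (K →+* K)) (ord : Admissible n m)
    (F : Set (MvPolynomial (DVar n m) K)) (p r : MvPolynomial (DVar n m) K) : Prop :=
  ∃ q ∈ F, ∃ lq, IsLm ord q lq ∧ ∃ (t : DMon n m) (θ : Shift n),
    (t + shiftM θ lq) ∈ p.support ∧
    r = p - MvPolynomial.monomial t (p.coeff (t + shiftM θ lq)) * sigmaR σK θ q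

/-- `r` is in normal form modulo `F`: no monomial of `r` is divisible by the
leading monomial of any element of `F`. -/
def InNormalForm {n m : ℕ} {K : Type} [Field K] (ord : Admissible n m)
    (F : Set (MvPolynomial (DVar n m) K)) (r : MvPolynomial (DVar n m) K) : Prop :=
  ∀ w ∈ r.support, ¬ ∃ q ∈ F, ∃ lq, IsLm ord q lq ∧ MDvd lq w


/-! ### Auxiliary development -/

set_option maxHeartbeats 2000000

namespace DiffRedAux

open Finsupp MvPolynomial Ordinal

variable {n m : ℕ}

/-! #### Shifts -/

lemma shiftV_zero : shiftV (0 : Shift n) = (id : DVar n m → DVar n m) := by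
  funext v; simp [shiftV]

lemma shiftM_zero (w : DMon n m) : shiftM 0 w = w := by
  rw [shiftM, shiftV_zero, Finsupp.mapDomain_id]

lemma shiftV_injective (θ : Shift n) : Function.Injective (shiftV (m := m) θ) := by
  intro a b h
  have h' : ((θ + a.1, a.2) : DVar n m) = (θ + b.1, b.2) := h
  rw [Prod.mk.injEq] at h'
  exact Prod.ext (add_left_cancel h'.1) h'.2

/-! #### Order helpers -/

variable (ord : Admissible n m)

/-- Non-strict version of the admissible order. -/
def Le (a b : DMon n m) : Prop := ord.lt a b ∨ a = b

lemma Le.trans' {a b c : DMon n m} (h1 : Le ord a b) (h2 : Le ord b c) : Le ord a c := by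
  rcases h1 with h1 | rfl
  · rcases h2 with h2 | rfl
    · exact Or.inl (ord.trans _ _ _ h1 h2)
    · exact Or.inl h1
  · exact h2

lemma translate_lt (t a b : DMon n m) : ord.lt a b ↔ ord.lt (t + a) (t + b) := by
  have := ord.compat a b t 0
  rwa [shiftM_zero, shiftM_zero] at this

lemma add_lt_right {c d : DMon n m} (h : ord.lt c d) (a : DMon n m) :
    ord.lt (a + c) (a + d) := (translate_lt ord a c d).1 h

lemma add_lt_left {a b : DMon n m} (h : ord.lt a b) (c : DMon n m) :
    ord.lt (a + c) (b + c) := by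
  rw [add_comm a c, add_comm b c]; exact add_lt_right ord h c

lemma add_le {a b c d : DMon n m} (h1 : Le ord a b) (h2 : Le ord c d) :
    Le ord (a + c) (b + d) := by
  rcases h1 with h1 | rfl
  · rcases h2 with h2 | rfl
    · exact Or.inl (ord.trans _ _ _ (add_lt_right ord h2 a) (add_lt_left ord h1 d))
    · exact Or.inl (add_lt_left ord h1 c)
  · rcases h2 with h2 | rfl
    · exact Or.inl (add_lt_right ord h2 a)
    · exact Or.inr rfl

lemma zero_le (a : DMon n m) : Le ord 0 a := by
  by_cases h : a = 0
  · exact Or.inr h.symm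
  · exact Or.inl (ord.pos a h)

/-- Shifting a variable only increases it. -/
lemma var_le : ∀ (N : ℕ) (δ θ : Shift n) (α : Fin m), (∑ i, δ i) = N →
    Le ord (Finsupp.single ((θ, α) : DVar n m) 1)
      (Finsupp.single ((θ + δ, α) : DVar n m) 1) := by
  intro N
  induction N with
  | zero =>
    intro δ θ α hδ
    have : δ = 0 := by
      funext j
      exact (Finset.sum_eq_zero_iff.1 hδ) j (Finset.mem_univ j)
    subst this
    exact Or.inr (by rw [add_zero])
  | succ N ih =>
    intro δ θ α hδ
    have hex : ∃ i, δ i ≠ 0 := by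
      by_contra hc
      push_neg at hc
      have : (∑ i, δ i) = 0 := Finset.sum_eq_zero fun i _ => hc i
      omega
    obtain ⟨i, hi⟩ := hex
    set δ' : Shift n := fun j => δ j - (Pi.single i 1 : Shift n) j with hδ'def
    have hsingle_le : ∀ j, (Pi.single i 1 : Shift n) j ≤ δ j := by
      intro j
      by_cases hj : j = i
      · subst hj; simp only [Pi.single_eq_same]; omega
      · simp [Pi.single_apply, hj]
    have hδeq : δ = Pi.single i 1 + δ' := by
      funext j
      have := hsingle_le j
      simp only [hδ'def, Pi.add_apply]
      omega
    have hsum' : (∑ j, δ' j) = N := by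
      have h1 : (∑ j, δ j) = (∑ j, (Pi.single i 1 : Shift n) j) + (∑ j, δ' j) := by
        rw [← Finset.sum_add_distrib]
        refine Finset.sum_congr rfl fun j _ => ?_
        have := hsingle_le j
        simp only [hδ'def]
        omega
      have h2 : (∑ j, (Pi.single i 1 : Shift n) j) = 1 := by
        classical
        rw [Finset.sum_pi_single']
        simp
      omega
    have step : ord.lt (Finsupp.single ((θ, α) : DVar n m) 1)
        (Finsupp.single ((θ + Pi.single i 1, α) : DVar n m) 1) := ord.ranking θ i α
    have rest := ih δ' (θ + Pi.single i 1) α hsum'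
    have : Le ord (Finsupp.single ((θ, α) : DVar n m) 1)
        (Finsupp.single ((θ + Pi.single i 1 + δ', α) : DVar n m) 1) :=
      Le.trans' ord (Or.inl step) rest
    rwa [add_assoc, ← hδeq] at this

/-- The embedding of difference variables into a product of `ℕ`-tuples used for
the partial-well-order argument. -/
def emb (x : DVar n m) : (Fin n → ℕ) × (Fin m → ℕ) := (x.1, Pi.single x.2 1)

lemma single_le_of_emb {x y : DVar n m} (h : emb x ≤ emb y) :
    Le ord (Finsupp.single x 1) (Finsupp.single y 1) := by
  have h1 : x.1 ≤ y.1 := h.1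
  have h2 : (Pi.single x.2 1 : Fin m → ℕ) ≤ Pi.single y.2 1 := h.2
  have hα : x.2 = y.2 := by
    have := h2 x.2
    by_cases hc : x.2 = y.2
    · exact hc
    · simp [Pi.single_apply, Ne.symm hc] at this
  have hθ : x.1 + (y.1 - x.1) = y.1 := by
    funext j
    exact Nat.add_sub_cancel' (h1 j)
  have hy : ((x.1 + (y.1 - x.1), x.2) : DVar n m) = y := by
    rw [hθ, hα]
  have := var_le ord _ (y.1 - x.1) x.1 x.2 rfl
  rw [hy, Prod.mk.eta] at this
  exact this

/-- Sum of variables of a list, as a monomial. -/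
noncomputable def sumL (l : List (DVar n m)) : DMon n m :=
  (l.map (fun x => Finsupp.single x 1)).sum

lemma sumL_nil : sumL ([] : List (DVar n m)) = 0 := rfl

lemma sumL_cons (a : DVar n m) (l : List (DVar n m)) :
    sumL (a :: l) = Finsupp.single a 1 + sumL l := by
  simp [sumL]

lemma msum_eq (s : Multiset (DVar n m)) :
    (s.map (fun x => Finsupp.single x (1:ℕ))).sum = Multiset.toFinsupp s := by
  classical
  induction s using Multiset.induction with
  | empty => simp
  | cons a s ih =>
    rw [Multiset.map_cons, Multiset.sum_cons, ih, ← Multiset.singleton_add,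
      Multiset.toFinsupp_add, Multiset.toFinsupp_singleton]

lemma sumL_toList (w : DMon n m) : sumL (Finsupp.toMultiset w).toList = w := by
  classical
  have h1 : (sumL (Finsupp.toMultiset w).toList : DMon n m)
      = ((Finsupp.toMultiset w).map (fun x => Finsupp.single x (1:ℕ))).sum := by
    conv_rhs => rw [← Multiset.coe_toList (Finsupp.toMultiset w)]
    rw [Multiset.map_coe, Multiset.sum_coe]
    rfl
  rw [h1, msum_eq, Finsupp.toMultiset_toFinsupp]

lemma sublist_le : ∀ {l₁ l₂ : List (DVar n m)},
    List.SublistForall₂ (fun x y => emb x ≤ emb y) l₁ l₂ →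
    Le ord (sumL l₁) (sumL l₂) := by
  intro l₁ l₂ h
  induction h with
  | nil => exact zero_le ord _
  | cons hab _ ih =>
    rw [sumL_cons, sumL_cons]
    exact add_le ord (single_le_of_emb ord hab) ih
  | cons_right _ ih =>
    rename_i a l₁' l₂' _
    rw [sumL_cons]
    have : Le ord (0 + sumL l₁') (Finsupp.single a 1 + sumL l₂') :=
      add_le ord (zero_le ord _) ih
    rwa [zero_add] at this

/-- Well-foundedness of an admissible ordering. -/
lemma lt_wf : WellFounded ord.lt := by
  haveI : IsStrictOrder (DMon n m) ord.lt :=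
    { irrefl := ord.irrefl, toIsTrans := ⟨ord.trans⟩ }
  rw [RelEmbedding.wellFounded_iff_isEmpty]
  constructor
  intro f
  -- Dickson's lemma for the variables
  have hP : (Set.univ : Set ((Fin n → ℕ) × (Fin m → ℕ))).IsPWO := by
    rw [← Set.univ_prod_univ]
    haveI h1 : ∀ i : Fin n, IsWellOrder ((fun _ : Fin n => ℕ) i) (· < ·) :=
      fun _ => inferInstanceAs (IsWellOrder ℕ (· < ·))
    haveI h2 : ∀ i : Fin m, IsWellOrder ((fun _ : Fin m => ℕ) i) (· < ·) :=
      fun _ => inferInstanceAs (IsWellOrder ℕ (· < ·))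
    exact (Set.isPWO_of_wellQuasiOrderedLE _).prod (Set.isPWO_of_wellQuasiOrderedLE _)
  have hH := hP.partiallyWellOrderedOn_sublistForall₂ (r := (· ≤ ·))
  set g : ℕ → List ((Fin n → ℕ) × (Fin m → ℕ)) :=
    fun k => ((Finsupp.toMultiset (f k)).toList).map emb with hg
  obtain ⟨i, j, hij, hsl⟩ := hH.exists_lt (f := g) (fun k => by intro x _; trivial)
  rw [hg] at hsl
  rw [List.sublistForall₂_map_left_iff, List.sublistForall₂_map_right_iff] at hsl
  have hle : Le ord (f i) (f j) := by
    have := sublist_le ord hsl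
    rwa [sumL_toList, sumL_toList] at this
  have hgt : ord.lt (f j) (f i) := f.map_rel_iff.2 hij
  rcases hle with hle | heq
  · exact ord.irrefl _ (ord.trans _ _ _ hle hgt)
  · rw [heq] at hgt
    exact ord.irrefl _ hgt

/-! #### A linear order synonym carrying the admissible ordering -/

/-- Type synonym for `DMon n m` carrying the admissible order `ord`. -/
def Syn {n m : ℕ} (_ord : Admissible n m) := DMon n m

noncomputable instance instSynLO {n m : ℕ} (ord : Admissible n m) : LinearOrder (Syn ord) where
  le a b := ord.lt a b ∨ a = b
  lt a b := ord.lt a b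
  le_refl a := Or.inr rfl
  le_trans a b c h1 h2 := Le.trans' ord h1 h2
  lt_iff_le_not_ge a b := by
    constructor
    · intro h
      refine ⟨Or.inl h, ?_⟩
      rintro (h' | rfl)
      · exact ord.irrefl _ (ord.trans _ _ _ h h')
      · exact ord.irrefl _ h
    · rintro ⟨h1 | rfl, h2⟩
      · exact h1
      · exact absurd (Or.inr rfl) h2
  le_antisymm a b h1 h2 := by
    rcases h1 with h1 | rfl
    · rcases h2 with h2 | rfl
      · exact absurd (ord.trans _ _ _ h1 h2) (ord.irrefl _)
      · rfl
    · rfl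
  le_total a b := by
    rcases ord.trichotomy a b with h | rfl | h
    · exact Or.inl (Or.inl h)
    · exact Or.inl (Or.inr rfl)
    · exact Or.inr (Or.inl h)
  toDecidableLE := fun a b => Classical.propDecidable _

lemma syn_lt_iff {ord : Admissible n m} {a b : Syn ord} :
    a < b ↔ ord.lt a b := Iff.rfl

/-! #### The ordinal-valued measure on finite sets of monomials -/

variable {T : Type} [LinearOrder T]

/-- The measure `∑ a ∈ X, ω ^ rk a` (summed in decreasing order). -/
noncomputable def mu (rk : T → Ordinal.{0}) : Finset T → Ordinal.{0}
  | X =>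
    if h : X.Nonempty then
      ω ^ rk (X.max' h) + mu rk (X.erase (X.max' h))
    else 0
  termination_by X => X.card
  decreasing_by exact Finset.card_erase_lt_of_mem (X.max'_mem h)

lemma mu_of_nonempty (rk : T → Ordinal.{0}) {X : Finset T} (h : X.Nonempty) :
    mu rk X = ω ^ rk (X.max' h) + mu rk (X.erase (X.max' h)) := by
  rw [mu]
  rw [dif_pos h]

lemma mu_lt (rk : T → Ordinal.{0}) (hrk : ∀ a b : T, a < b → rk a < rk b) (b : T) :
    ∀ X : Finset T, (∀ a ∈ X, a < b) → mu rk X < ω ^ rk b := by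
  classical
  intro X
  induction X using Finset.strongInduction with
  | _ X ih =>
    intro hX
    by_cases h : X.Nonempty
    · rw [mu_of_nonempty rk h]
      have h1 : ω ^ rk (X.max' h) < ω ^ rk b := by
        rw [Ordinal.opow_lt_opow_iff_right Ordinal.one_lt_omega0]
        exact hrk _ _ (hX _ (X.max'_mem h))
      have h2 : mu rk (X.erase (X.max' h)) < ω ^ rk b := by
        refine ih _ (Finset.erase_ssubset (X.max'_mem h)) ?_
        intro a ha
        exact hX a (Finset.mem_of_mem_erase ha)
      exact Ordinal.principal_add_omega0_opow (rk b) h1 h2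
    · rw [mu]
      rw [dif_neg h]
      exact Ordinal.opow_pos _ Ordinal.omega0_pos

lemma mu_key (rk : T → Ordinal.{0}) (hrk : ∀ a b : T, a < b → rk a < rk b) :
    ∀ (B A : Finset T) (w : T), w ∈ B → w ∉ A →
      (∀ u ∈ A, (u ∈ B ∧ u ≠ w) ∨ u < w) → mu rk A < mu rk B := by
  classical
  intro B
  induction B using Finset.strongInduction with
  | _ B ih =>
    intro A w hwB hwA h3
    have hBne : B.Nonempty := ⟨w, hwB⟩
    set M := B.max' hBne with hM
    by_cases hMw : M = w
    · have hA : ∀ a ∈ A, a < w := by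
        intro u hu
        rcases h3 u hu with ⟨h1, h2⟩ | h
        · exact lt_of_le_of_ne (hMw ▸ Finset.le_max' B u h1) h2
        · exact h
      calc mu rk A < ω ^ rk w := mu_lt rk hrk w A hA
        _ ≤ mu rk B := by
            rw [mu_of_nonempty rk hBne, ← hM, hMw]
            exact le_self_add
    · have hwM : w < M := lt_of_le_of_ne (Finset.le_max' B w hwB) (fun hh => hMw hh.symm)
      by_cases hMA : M ∈ A
      · have hAne : A.Nonempty := ⟨M, hMA⟩
        have hmaxA : A.max' hAne = M := by
          refine le_antisymm ?_ (Finset.le_max' A M hMA)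
          refine Finset.max'_le A hAne _ ?_
          intro u hu
          rcases h3 u hu with ⟨h1, _⟩ | h
          · exact Finset.le_max' B u h1
          · exact le_of_lt (h.trans hwM)
        rw [mu_of_nonempty rk hAne, mu_of_nonempty rk hBne, hmaxA, ← hM]
        rw [add_lt_add_iff_left]
        refine ih (B.erase M) (Finset.erase_ssubset (B.max'_mem hBne)) (A.erase M) w ?_ ?_ ?_
        · exact Finset.mem_erase.2 ⟨fun hh => hMw hh.symm, hwB⟩
        · intro hc
          exact hwA (Finset.mem_of_mem_erase hc)
        · intro u hu
          have huA : u ∈ A := Finset.mem_of_mem_erase hu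
          have huM : u ≠ M := (Finset.mem_erase.1 hu).1
          rcases h3 u huA with ⟨h1, h2⟩ | h
          · exact Or.inl ⟨Finset.mem_erase.2 ⟨huM, h1⟩, h2⟩
          · exact Or.inr h
      · have hA : ∀ a ∈ A, a < M := by
          intro u hu
          rcases h3 u hu with ⟨h1, _⟩ | h
          · exact lt_of_le_of_ne (Finset.le_max' B u h1) (fun hh => hMA (hh ▸ hu))
          · exact h.trans hwM
        calc mu rk A < ω ^ rk M := mu_lt rk hrk M A hA
          _ ≤ mu rk B := by
              rw [mu_of_nonempty rk hBne, ← hM]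
              exact le_self_add

/-! #### Polynomial lemmas -/

variable {K : Type} [Field K]

lemma sigmaR_eq (σK : Shift n → (K →+* K)) (θ : Shift n) :
    sigmaR (n := n) (m := m) σK θ
      = ((MvPolynomial.rename (shiftV θ)).toRingHom.comp
          (MvPolynomial.map (σK θ) : MvPolynomial (DVar n m) K →+* _)) := by
  apply MvPolynomial.ringHom_ext
  · intro r
    simp [sigmaR]
  · intro v
    simp [sigmaR]

lemma support_sigmaR (σK : Shift n → (K →+* K)) (θ : Shift n)
    (q : MvPolynomial (DVar n m) K) :
    (sigmaR σK θ q).support ⊆ q.support.image (shiftM θ) := by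
  classical
  rw [sigmaR_eq]
  intro u hu
  simp only [RingHom.coe_comp, Function.comp_apply, AlgHom.toRingHom_eq_coe,
    RingHom.coe_coe] at hu
  rw [MvPolynomial.support_rename_of_injective (shiftV_injective θ)] at hu
  obtain ⟨s, hs, rfl⟩ := Finset.mem_image.1 hu
  exact Finset.mem_image.2 ⟨s, MvPolynomial.support_map_subset _ _ hs, rfl⟩

lemma coeff_sigmaR (σK : Shift n → (K →+* K)) (θ : Shift n)
    (q : MvPolynomial (DVar n m) K) (w : DMon n m) :
    (sigmaR σK θ q).coeff (shiftM θ w) = σK θ (q.coeff w) := by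
  rw [sigmaR_eq]
  simp only [RingHom.coe_comp, Function.comp_apply, AlgHom.toRingHom_eq_coe, RingHom.coe_coe]
  rw [show shiftM θ w = Finsupp.mapDomain (shiftV θ) w from rfl]
  rw [MvPolynomial.coeff_rename_mapDomain _ (shiftV_injective θ)]
  rw [MvPolynomial.coeff_map]

lemma lm_unique {q : MvPolynomial (DVar n m) K} {w w' : DMon n m}
    (h1 : IsLm ord q w) (h2 : IsLm ord q w') : w = w' := by
  by_contra hne
  exact ord.irrefl _ (ord.trans _ _ _ (h1.2 w' h2.1 (Ne.symm hne)) (h2.2 w h1.1 hne))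

/-- The key combinatorial property of an elementary reduction step. -/
lemma red_support (σK : Shift n → (K →+* K))
    {F : Finset (MvPolynomial (DVar n m) K)}
    (hF : ∀ f ∈ F, f ≠ 0 ∧ IsMonicP ord f)
    {p r : MvPolynomial (DVar n m) K}
    (h : RedStep σK ord (↑F) p r) :
    ∃ w, w ∈ p.support ∧ w ∉ r.support ∧
      ∀ u ∈ r.support, (u ∈ p.support ∧ u ≠ w) ∨ ord.lt u w := by
  classical
  obtain ⟨q, hqF, lq, hlq, t, θ, hw, hr⟩ := h
  obtain ⟨-, lq', hlq', hcoef⟩ := hF q (Finset.mem_coe.1 hqF)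
  rw [lm_unique ord hlq' hlq] at hcoef
  have hgsupp : ∀ u ∈ (MvPolynomial.monomial t (p.coeff (t + shiftM θ lq))
      * sigmaR σK θ q).support, ∃ s ∈ q.support, u = t + shiftM θ s := by
    intro u hu
    have h1 := MvPolynomial.support_mul
      (MvPolynomial.monomial t (p.coeff (t + shiftM θ lq))) (sigmaR σK θ q) hu
    rw [Finset.mem_add] at h1
    obtain ⟨a, ha, b, hb, rfl⟩ := h1
    have ha' : a = t := by
      have := MvPolynomial.support_monomial_subset ha
      simpa using this
    obtain ⟨s, hs, rfl⟩ := Finset.mem_image.1 (support_sigmaR σK θ q hb)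
    exact ⟨s, hs, by rw [ha']⟩
  have hgw : (MvPolynomial.monomial t (p.coeff (t + shiftM θ lq))
      * sigmaR σK θ q).coeff (t + shiftM θ lq) = p.coeff (t + shiftM θ lq) := by
    rw [MvPolynomial.coeff_monomial_mul, coeff_sigmaR, hcoef, map_one, mul_one]
  have hrw : r.coeff (t + shiftM θ lq) = 0 := by
    rw [hr, MvPolynomial.coeff_sub, hgw]
    exact _root_.sub_self _
  refine ⟨t + shiftM θ lq, hw, by simp [MvPolynomial.mem_support_iff, hrw], ?_⟩
  intro u hu
  have hune : u ≠ t + shiftM θ lq := by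
    intro hh
    rw [hh] at hu
    exact (MvPolynomial.mem_support_iff.1 hu) hrw
  by_cases hup : u ∈ p.support
  · exact Or.inl ⟨hup, hune⟩
  · right
    have hupz : p.coeff u = 0 := by
      by_contra hc
      exact hup (MvPolynomial.mem_support_iff.2 hc)
    have hug : u ∈ (MvPolynomial.monomial t (p.coeff (t + shiftM θ lq))
        * sigmaR σK θ q).support := by
      rw [MvPolynomial.mem_support_iff]
      intro hc
      apply MvPolynomial.mem_support_iff.1 hu
      rw [hr, MvPolynomial.coeff_sub, hc, hupz]
      simp
    obtain ⟨s, hs, rfl⟩ := hgsupp u hug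
    have hslq : s ≠ lq := fun hh => hune (by rw [hh])
    exact (ord.compat s lq t θ).1 (hlq.2 s hs hslq)

end DiffRedAux

/-- Termination of difference reduction: modulo a finite set `F` of monic nonzero
difference polynomials there is no infinite chain of elementary reduction steps, and
consequently every polynomial reduces in finitely many steps to a normal form modulo `F`. -/
theorem reduction_terminates (n m : ℕ) (hn : 1 ≤ n) (hm : 1 ≤ m)
    (K : Type) [Field K] (σK : Shift n → (K →+* K))
    (hσ0 : σK 0 = RingHom.id K)
    (hσadd : ∀ a b : Shift n, σK (a + b) = (σK a).comp (σK b))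
    (ord : Admissible n m)
    (F : Finset (MvPolynomial (DVar n m) K))
    (hF : ∀ f ∈ F, f ≠ 0 ∧ IsMonicP ord f) :
    (¬ ∃ c : ℕ → MvPolynomial (DVar n m) K,
        ∀ k : ℕ, RedStep σK ord (↑F) (c k) (c (k + 1))) ∧
    (∀ p : MvPolynomial (DVar n m) K,
      ∃ r, Relation.ReflTransGen (RedStep σK ord (↑F)) p r ∧ InNormalForm ord (↑F) r) := by
  classical
  open DiffRedAux in
  -- the well-founded measure
  have wf : WellFounded ord.lt := lt_wf ord
  let rk : Syn ord → Ordinal := fun a => (wf.apply a).rank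
  have hrk : ∀ a b : Syn ord, a < b → rk a < rk b := fun a b h => Acc.rank_lt_of_rel (wf.apply b) h
  let meas : MvPolynomial (DVar n m) K → Ordinal :=
    fun p => mu rk (p.support : Finset (Syn ord))
  have hdec : ∀ p r, RedStep σK ord (↑F) p r → meas r < meas p := by
    intro p r h
    obtain ⟨w, hwp, hwr, hsub⟩ := red_support ord σK hF h
    exact mu_key rk hrk (p.support : Finset (Syn ord)) (r.support : Finset (Syn ord))
      w hwp hwr hsub
  have hwf : WellFounded (fun r p => RedStep σK ord (↑F) p r) :=
    Subrelation.wf (fun {r p} h => hdec p r h) (InvImage.wf meas Ordinal.lt_wf)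
  constructor
  · rintro ⟨c, hc⟩
    have key : ∀ a, ∀ k, c k ≠ a := by
      intro a
      induction a using hwf.induction with
      | _ a IH =>
        intro k hk
        exact IH (c (k + 1)) (by rw [← hk]; exact hc k) (k + 1) rfl
    exact key (c 0) 0 rfl
  · intro p
    induction p using hwf.induction with
    | _ p IH =>
      by_cases hnf : InNormalForm ord (↑F) p
      · exact ⟨p, Relation.ReflTransGen.refl, hnf⟩
      · rw [InNormalForm] at hnf
        push_neg at hnf
        obtain ⟨w, hw, q, hqF, lq, hlm, t, θ, hwt⟩ := hnf
        set r := p - MvPolynomial.monomial t (p.coeff (t + shiftM θ lq)) * sigmaR σK θ q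
          with hrdef
        have hstep : RedStep σK ord (↑F) p r :=
          ⟨q, hqF, lq, hlm, t, θ, by rw [← hwt]; exact hw, hrdef⟩
        obtain ⟨r', hsteps, hnf'⟩ := IH r hstep
        exact ⟨r', Relation.ReflTransGen.head hstep hsteps, hnf'⟩
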